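/- Let G = (Z₂)ⁿ, char k ≠ 2, and suppose the Euclidean norm makes k_F G a composition algebra (equivalently F² = 1 and F(x,xz)F(y,yz) + F(x,yz)F(y,xz) = 0 for x ≠ y). Then k_F G is an alternative algebra. -/

import Mathlib

/-- The twisted product on the group algebra `kG`. -/
def tmul {G : Type*} [Group G] [Fintype G] {k : Type*} [Field k]
    (F : G → G → k) (a b : G → k) : G → k :=
  fun z => ∑ x : G, F x (x⁻¹ * z) * a x * b (x⁻¹ * z)

section Aux

variable {G : Type*} [CommGroup G] {k : Type*} [Field k] {F : G → G → k}

lemma mulSelfNeOne' (hG : ∀ x : G, x * x = 1) {x y : G} (h : x ≠ y) : x * y ≠ 1 := by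
  intro he
  exact h (by rw [← mul_one x, ← he, ← mul_assoc, hG, one_mul])

lemma lemA (hid : ∀ x y z : G, x ≠ y →
      F x (x * z) * F y (y * z) + F x (y * z) * F y (x * z) = 0)
    (hl : ∀ x, F 1 x = 1) {x : G} (hx : x ≠ 1) (z : G) :
    F x (x * z) = - F x z := by
  have h := hid x 1 z hx
  simp only [hl, one_mul, mul_one] at h
  linear_combination h

lemma lemFxx (hid : ∀ x y z : G, x ≠ y →
      F x (x * z) * F y (y * z) + F x (y * z) * F y (x * z) = 0)
    (hl : ∀ x, F 1 x = 1) (hr : ∀ x, F x 1 = 1) {x : G} (hx : x ≠ 1) :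
    F x x = -1 := by
  have h := lemA hid hl hx 1
  rw [mul_one, hr] at h
  exact h

lemma lemB (hG : ∀ x : G, x * x = 1)
    (hid : ∀ x y z : G, x ≠ y →
      F x (x * z) * F y (y * z) + F x (y * z) * F y (x * z) = 0)
    (hr : ∀ x, F x 1 = 1) {v : G} (hv : v ≠ 1) (u : G) :
    F (u * v) v = - F u v := by
  have hne : u * v ≠ u := fun h => hv (by rwa [mul_eq_left] at h)
  have h := hid (u * v) u u hne
  have e1 : u * v * u = v := by rw [mul_comm u v, mul_assoc, hG, mul_one]
  rw [e1, hG, hr, hr] at h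
  simp only [mul_one, one_mul] at h
  linear_combination h

lemma lemC (hid : ∀ x y z : G, x ≠ y →
      F x (x * z) * F y (y * z) + F x (y * z) * F y (x * z) = 0)
    (hl : ∀ x, F 1 x = 1) (hr : ∀ x, F x 1 = 1) (hsq : ∀ x y : G, F x y ^ 2 = 1)
    {x y : G} (hx : x ≠ 1) (hy : y ≠ 1) (hxy : x ≠ y) :
    F y x = - F x y := by
  have h := hid x y 1 hxy
  simp only [mul_one] at h
  rw [lemFxx hid hl hr hx, lemFxx hid hl hr hy] at h
  have hs := hsq x y
  linear_combination F x y * h - F y x * hs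

lemma keyL (hG : ∀ x : G, x * x = 1)
    (hid : ∀ x y z : G, x ≠ y →
      F x (x * z) * F y (y * z) + F x (y * z) * F y (x * z) = 0)
    (hr : ∀ x, F x 1 = 1) (hl : ∀ x, F 1 x = 1) (hsq : ∀ x y : G, F x y ^ 2 = 1)
    (x y z : G) :
    F (x*y) (x*y*z) * F x y + F (x*y) (x*y*z) * F y x
      = F x (x*z) * F y (x*y*z) + F y (y*z) * F x (x*y*z) := by
  by_cases hx : x = 1
  · subst hx; simp only [one_mul, hl, hr, mul_one] <;> ring
  by_cases hy : y = 1
  · subst hy; simp only [one_mul, mul_one, hl, hr] <;> ring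
  by_cases hxy : x = y
  · subst hxy
    have ha := lemA hid hl hx z
    have hfxx := lemFxx hid hl hr hx
    rw [hG, one_mul, hl, hfxx, ha]
    linear_combination 2 * hsq x z
  · have hC := lemC hid hl hr hsq hx hy hxy
    have hA2 := lemA hid hl hx z
    have hA3 := lemA hid hl hy z
    have hI := hid x y (y*z) hxy
    rw [← mul_assoc, ← mul_assoc, hG, one_mul] at hI
    rw [hC, hA2, hA3]
    linear_combination hI

lemma keyR (hG : ∀ x : G, x * x = 1)
    (hid : ∀ x y z : G, x ≠ y →
      F x (x * z) * F y (y * z) + F x (y * z) * F y (x * z) = 0)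
    (hr : ∀ x, F x 1 = 1) (hl : ∀ x, F 1 x = 1) (hsq : ∀ x y : G, F x y ^ 2 = 1)
    (x y z : G) :
    F (x*y) (x*y*z) * F x y + F (y*z) y * F x (x*y*z)
      = F x (x*z) * F y (x*y*z) + F x (x*z) * F (x*y*z) y := by
  by_cases hx : x = 1
  · subst hx; simp only [one_mul, hl] <;> ring
  by_cases hy : y = 1
  · subst hy; simp only [mul_one, one_mul, hl, hr] <;> ring
  by_cases hxy : x = y
  · subst hxy
    by_cases hz1 : z = 1
    · subst hz1
      simp only [mul_one, hG, hr, hl, lemFxx hid hl hr hx] <;> ring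
    by_cases hz2 : z = x
    · rw [hz2]
      simp only [hG, one_mul, hl, hr] <;> ring
    · have hB : F (x*z) x = - F z x := by
        have := lemB hG hid hr hx z
        rwa [mul_comm z x] at this
      have hCzx : F z x = - F x z :=
        lemC hid hl hr hsq hx hz1 (fun h => hz2 h.symm)
      have ha := lemA hid hl hx z
      have hfxx := lemFxx hid hl hr hx
      rw [hG, one_mul, hl, hfxx, hB, hCzx, ha]
      linear_combination hsq x z
  · have hxy1 : x * y ≠ 1 := mulSelfNeOne' hG hxy
    have hC : F y x = - F x y := lemC hid hl hr hsq hx hy hxy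
    by_cases hz1 : z = 1
    · subst hz1
      have hfxy := lemFxx hid hl hr hxy1
      have hfyy := lemFxx hid hl hr hy
      have hfxx := lemFxx hid hl hr hx
      have hA1 := lemA hid hl hx y
      have hAy : F y (x*y) = - F y x := by
        have := lemA hid hl hy x
        rwa [mul_comm y x] at this
      have hB := lemB hG hid hr hy x
      simp only [mul_one]
      rw [hfxy, hfyy, hfxx, hA1, hAy, hB, hC]
      ring
    by_cases hz2 : z = x
    · rw [hz2]
      have e : x*y*x = y := by rw [mul_comm x y, mul_assoc, hG, mul_one]
      have hB := lemB hG hid hr hy x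
      have hfyy := lemFxx hid hl hr hy
      rw [e, hG, hr, mul_comm y x, hB, hfyy]
      linear_combination (-2 : k) * hsq x y
    by_cases hz3 : z = y
    · rw [hz3]
      have e : x*y*y = x := by rw [mul_assoc, hG, mul_one]
      have hBx : F (x*y) x = - F y x := by
        have := lemB hG hid hr hx y
        rwa [mul_comm y x] at this
      have hA1 := lemA hid hl hx y
      have hfxx := lemFxx hid hl hr hx
      rw [e, hG, hl, hBx, hfxx, hA1, hC]
      linear_combination hsq x y
    by_cases hz4 : z = x * y
    · rw [hz4]
      have e1 : x*y*(x*y) = 1 := hG (x*y)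
      have e2 : y*(x*y) = x := by rw [mul_comm x y, ← mul_assoc, hG, one_mul]
      have e3 : x*(x*y) = y := by rw [← mul_assoc, hG, one_mul]
      rw [e1, e2, e3]
      simp only [hr, hl]
      ring
    · -- generic case
      have hyz1 : y * z ≠ 1 := mulSelfNeOne' hG (Ne.symm hz3)
      have hxz1 : x * z ≠ 1 := mulSelfNeOne' hG (Ne.symm hz2)
      have hA1 : F (x*y) (x*y*z) = - F (x*y) z := lemA hid hl hxy1 z
      have hB1 : F (y*z) y = - F z y := by
        have := lemB hG hid hr hy z
        rwa [mul_comm z y] at this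
      have hA2 : F x (x*y*z) = - F x (y*z) := by
        have := lemA hid hl hx (y*z)
        rwa [← mul_assoc] at this
      have hA3 : F x (x*z) = - F x z := lemA hid hl hx z
      have hA4 : F y (x*y*z) = - F y (x*z) := by
        have := lemA hid hl hy (x*z)
        rwa [mul_left_comm y x z, ← mul_assoc] at this
      have hB2 : F (x*y*z) y = - F (x*z) y := by
        have := lemB hG hid hr hy (x*z)
        rwa [mul_assoc x z y, mul_comm z y, ← mul_assoc] at this
      have hyxz : y ≠ x * z := fun h => hz4 (by rw [h, ← mul_assoc, hG, one_mul])
      have hxyz2 : x ≠ y * z := fun h => hz4 (by rw [h, mul_comm y z, mul_assoc, hG, mul_one])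
      have hC1 : F (x*z) y = - F y (x*z) := lemC hid hl hr hsq hy hxz1 hyxz
      have hC2 : F (y*z) x = - F x (y*z) := lemC hid hl hr hsq hx hyz1 hxyz2
      have hA5 : F (y*z) (x*y*z) = - F (y*z) x := by
        have := lemA hid hl hyz1 x
        rwa [mul_comm (y*z) x, ← mul_assoc] at this
      have hB3 : F (x*y) y = - F x y := lemB hG hid hr hy x
      have hne2 : x * y ≠ y * z := by
        intro h
        have : y * x = y * z := by rw [mul_comm y x]; exact h
        exact hz2 (mul_left_cancel this).symm
      have hR := hid (x*y) (y*z) z hne2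
      have e : y*z*z = y := by rw [mul_assoc, hG, mul_one]
      rw [e] at hR
      rw [hA1, hB1, hB3, hA5, hC2] at hR
      rw [hA1, hB1, hA2, hA3, hA4, hB2, hC1]
      linear_combination (-(F z y * F x y)) * hR + (F (x*y) z * F x y) * hsq z y +
        (-(F z y * F x (y*z))) * hsq x y

end Aux

/-- for `G ≅ (Z₂)ⁿ`, if the composition-algebra conditions hold then
`k_F G` is alternative. -/
theorem stmt11 {G : Type*} [CommGroup G] [Fintype G] {k : Type*} [Field k]
    (h2 : (2 : k) ≠ 0) (hG : ∀ x : G, x * x = 1)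
    (F : G → G → k) (hne : ∀ x y, F x y ≠ 0)
    (hr : ∀ x, F x 1 = 1) (hl : ∀ x, F 1 x = 1)
    (hsq : ∀ x y : G, F x y ^ 2 = 1)
    (hid : ∀ x y z : G, x ≠ y →
      F x (x * z) * F y (y * z) + F x (y * z) * F y (x * z) = 0) :
    ∀ a b : G → k,
      tmul F (tmul F a a) b = tmul F a (tmul F a b) ∧
      tmul F (tmul F a b) b = tmul F a (tmul F b b) := by
  have hinv : ∀ x : G, x⁻¹ = x := fun x => inv_eq_of_mul_eq_one_left (hG x)
  have hG' : ∀ x y : G, x * (x * y) = y := fun x y => by rw [← mul_assoc, hG, one_mul]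
  have hG'' : ∀ x y : G, x * y * y = x := fun x y => by rw [mul_assoc, hG, mul_one]
  have exp1 : ∀ (p q r : G → k) (z : G),
      tmul F (tmul F p q) r z
        = ∑ x : G, ∑ y : G, F (x*y) (x*y*z) * F x y * (p x * q y * r (x*y*z)) := by
    intro p q r z
    simp only [tmul, hinv]
    calc (∑ u : G, F u (u*z) * (∑ x : G, F x (x*u) * p x * q (x*u)) * r (u*z))
        = ∑ u : G, ∑ x : G, F u (u*z) * (F x (x*u) * p x * q (x*u)) * r (u*z) :=
          Finset.sum_congr rfl fun u _ => by rw [Finset.mul_sum, Finset.sum_mul]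
      _ = ∑ x : G, ∑ u : G, F u (u*z) * (F x (x*u) * p x * q (x*u)) * r (u*z) :=
          Finset.sum_comm
      _ = ∑ x : G, ∑ y : G, F (x*y) (x*y*z) * F x y * (p x * q y * r (x*y*z)) := by
          refine Finset.sum_congr rfl fun x _ => ?_
          rw [← Equiv.sum_comp (Equiv.mulLeft x)
            (fun u => F u (u*z) * (F x (x*u) * p x * q (x*u)) * r (u*z))]
          refine Finset.sum_congr rfl fun y _ => ?_
          simp only [Equiv.coe_mulLeft]
          rw [hG']
          ring
  have exp2 : ∀ (p q r : G → k) (z : G),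
      tmul F p (tmul F q r) z
        = ∑ x : G, ∑ y : G, F x (x*z) * F y (x*y*z) * (p x * q y * r (x*y*z)) := by
    intro p q r z
    simp only [tmul, hinv]
    refine Finset.sum_congr rfl fun x _ => ?_
    rw [Finset.mul_sum]
    refine Finset.sum_congr rfl fun y _ => ?_
    have e : y * (x * z) = x*y*z := by rw [mul_left_comm, ← mul_assoc]
    rw [e]
    ring
  intro a b
  constructor
  · funext z
    rw [exp1 a a b z, exp2 a a b z]
    have hswapL : (∑ x : G, ∑ y : G, F (x*y) (x*y*z) * F x y * (a x * a y * b (x*y*z)))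
        = ∑ x : G, ∑ y : G, F (x*y) (x*y*z) * F y x * (a x * a y * b (x*y*z)) := by
      rw [Finset.sum_comm]
      refine Finset.sum_congr rfl fun x _ => Finset.sum_congr rfl fun y _ => ?_
      rw [mul_comm y x]
      ring
    have hswapR : (∑ x : G, ∑ y : G, F x (x*z) * F y (x*y*z) * (a x * a y * b (x*y*z)))
        = ∑ x : G, ∑ y : G, F y (y*z) * F x (x*y*z) * (a x * a y * b (x*y*z)) := by
      rw [Finset.sum_comm]
      refine Finset.sum_congr rfl fun x _ => Finset.sum_congr rfl fun y _ => ?_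
      rw [mul_comm y x]
      ring
    have doubled :
        (∑ x : G, ∑ y : G, F (x*y) (x*y*z) * F x y * (a x * a y * b (x*y*z)))
          + (∑ x : G, ∑ y : G, F (x*y) (x*y*z) * F y x * (a x * a y * b (x*y*z)))
        = (∑ x : G, ∑ y : G, F x (x*z) * F y (x*y*z) * (a x * a y * b (x*y*z)))
          + (∑ x : G, ∑ y : G, F y (y*z) * F x (x*y*z) * (a x * a y * b (x*y*z))) := by
      rw [← Finset.sum_add_distrib, ← Finset.sum_add_distrib]
      refine Finset.sum_congr rfl fun x _ => ?_
      rw [← Finset.sum_add_distrib, ← Finset.sum_add_distrib]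
      refine Finset.sum_congr rfl fun y _ => ?_
      linear_combination (a x * a y * b (x*y*z)) * keyL hG hid hr hl hsq x y z
    apply mul_left_cancel₀ h2
    rw [two_mul, two_mul]
    nth_rewrite 2 [hswapL]
    nth_rewrite 2 [hswapR]
    exact doubled
  · funext z
    rw [exp1 a b b z, exp2 a b b z]
    have hswapL : (∑ x : G, ∑ y : G, F (x*y) (x*y*z) * F x y * (a x * b y * b (x*y*z)))
        = ∑ x : G, ∑ y : G, F (y*z) y * F x (x*y*z) * (a x * b y * b (x*y*z)) := by
      refine Finset.sum_congr rfl fun x _ => ?_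
      rw [← Equiv.sum_comp ((Equiv.mulRight z).trans (Equiv.mulLeft x))
        (fun u => F (x*u) (x*u*z) * F x u * (a x * b u * b (x*u*z)))]
      refine Finset.sum_congr rfl fun y _ => ?_
      simp only [Equiv.trans_apply, Equiv.coe_mulRight, Equiv.coe_mulLeft]
      rw [hG' x (y*z), hG'' y z, ← mul_assoc x y z]
      ring
    have hswapR : (∑ x : G, ∑ y : G, F x (x*z) * F y (x*y*z) * (a x * b y * b (x*y*z)))
        = ∑ x : G, ∑ y : G, F x (x*z) * F (x*y*z) y * (a x * b y * b (x*y*z)) := by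
      refine Finset.sum_congr rfl fun x _ => ?_
      rw [← Equiv.sum_comp ((Equiv.mulRight z).trans (Equiv.mulLeft x))
        (fun u => F x (x*z) * F u (x*u*z) * (a x * b u * b (x*u*z)))]
      refine Finset.sum_congr rfl fun y _ => ?_
      simp only [Equiv.trans_apply, Equiv.coe_mulRight, Equiv.coe_mulLeft]
      rw [hG' x (y*z), hG'' y z, ← mul_assoc x y z]
      ring
    have doubled :
        (∑ x : G, ∑ y : G, F (x*y) (x*y*z) * F x y * (a x * b y * b (x*y*z)))
          + (∑ x : G, ∑ y : G, F (y*z) y * F x (x*y*z) * (a x * b y * b (x*y*z)))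
        = (∑ x : G, ∑ y : G, F x (x*z) * F y (x*y*z) * (a x * b y * b (x*y*z)))
          + (∑ x : G, ∑ y : G, F x (x*z) * F (x*y*z) y * (a x * b y * b (x*y*z))) := by
      rw [← Finset.sum_add_distrib, ← Finset.sum_add_distrib]
      refine Finset.sum_congr rfl fun x _ => ?_
      rw [← Finset.sum_add_distrib, ← Finset.sum_add_distrib]
      refine Finset.sum_congr rfl fun y _ => ?_
      linear_combination (a x * b y * b (x*y*z)) * keyR hG hid hr hl hsq x y z
    apply mul_left_cancel₀ h2
    rw [two_mul, two_mul]
    nth_rewrite 2 [hswapL]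
    nth_rewrite 2 [hswapR]
    exact doubled
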